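/- (Identification of changes in mean indirect utility) Let D̄ : 𝒫 → ℝ ∪ {−∞} be concave, upper semicontinuous, and finite at some point, and suppose V(v) := sup_{P∈𝒫} Σ_{ω,a} P(a|ω)μ(ω)v_{a,ω} + D̄(P) is finite for every v ∈ ℝ^{A×Ω}. Fix v, v' ∈ ℝ^{A×Ω} and for t ∈ [0,1] set v_t := t v' + (1−t) v. If for each t ∈ [0,1] the supremum defining V(v_t) is attained at a unique P_t ∈ 𝒫, then V(v') − V(v) = ∫_0^1 Σ_{ω,a} P_t(a|ω) μ(ω) (v'_{a,ω} − v_{a,ω}) dt. -/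

import Mathlib

open scoped BigOperators

noncomputable section

/-- The set `𝒫` of state-dependent stochastic choice functions, viewed as the
subset of `ℝ^{A×Ω}` of points `P` with `P(·|ω) ∈ Δ(A)` for every state `ω`. -/
def SDSCset (A Ω : Type*) [Fintype A] [Fintype Ω] : Set (A × Ω → ℝ) :=
  {P | ∀ ω : Ω, (fun a : A => P (a, ω)) ∈ stdSimplex ℝ A}

variable {A Ω : Type*} [Fintype A] [Fintype Ω]

/-- Linear part of the objective: `Σ_{ω,a} P(a|ω) μ(ω) v_{a,ω}`. -/
def linUtil (μ : Ω → ℝ) (v P : A × Ω → ℝ) : ℝ :=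
  ∑ aw : A × Ω, P aw * μ aw.2 * v aw

/-- Concavity on `𝒫` of an `ℝ ∪ {−∞}`-valued aggregate disturbance. -/
def ConcaveOnP (D : (A × Ω → ℝ) → EReal) : Prop :=
  ∀ P₁ ∈ SDSCset A Ω, ∀ P₂ ∈ SDSCset A Ω, ∀ t : ℝ, 0 ≤ t → t ≤ 1 →
    (t : EReal) * D P₁ + ((1 - t : ℝ) : EReal) * D P₂ ≤ D (t • P₁ + (1 - t) • P₂)

/-- Indirect utility of the representative agent,
`V(v) = sup_{P ∈ 𝒫} Σ_{ω,a} P(a|ω) μ(ω) v_{a,ω} + D̄(P)`, as a real number. -/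
def Vfun (μ : Ω → ℝ) (D : (A × Ω → ℝ) → EReal) (v : A × Ω → ℝ) : ℝ :=
  sSup {x : ℝ | ∃ P ∈ SDSCset A Ω, ((linUtil μ v P : ℝ) : EReal) + D P = (x : EReal)}

/-- Extended-real-valued indirect utility
`V(v) = sup_{P ∈ 𝒫} Σ_{ω,a} P(a|ω) μ(ω) v_{a,ω} + D̄(P)`. -/
def VE (μ : Ω → ℝ) (D : (A × Ω → ℝ) → EReal) (v : A × Ω → ℝ) : EReal :=
  ⨆ P ∈ SDSCset A Ω, (((linUtil μ v P : ℝ) : EReal) + D P)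

/-- Identification of welfare changes; Theorem 4 in
Allen–Rehbeck 2019. If `D̄` is concave, usc, `ℝ ∪ {−∞}`-valued and finite
somewhere, `V` is finite everywhere, and along the segment
`v_t = t v' + (1−t) v` the supremum defining `V(v_t)` is attained at a unique
`P_t ∈ 𝒫`, then
`V(v') − V(v) = ∫_0^1 Σ_{ω,a} P_t(a|ω) μ(ω)(v'_{a,ω} − v_{a,ω}) dt`. -/
theorem statement15
    (μ : Ω → ℝ) (hμ : μ ∈ stdSimplex ℝ Ω) (hμpos : ∀ ω, 0 < μ ω)
    (D : (A × Ω → ℝ) → EReal)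
    (hDtop : ∀ P, D P ≠ ⊤) (hDconc : ConcaveOnP D)
    (hDusc : UpperSemicontinuousOn D (SDSCset A Ω))
    (hDfin : ∃ P ∈ SDSCset A Ω, D P ≠ ⊥)
    (hVfin : ∀ w : A × Ω → ℝ, VE μ D w ≠ ⊥ ∧ VE μ D w ≠ ⊤)
    (v v' : A × Ω → ℝ) (Pt : ℝ → A × Ω → ℝ)
    (hPt : ∀ t ∈ Set.Icc (0 : ℝ) 1,
      Pt t ∈ SDSCset A Ω ∧
      (∀ P ∈ SDSCset A Ω,
        ((linUtil μ (t • v' + (1 - t) • v) P : ℝ) : EReal) + D P ≤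
        ((linUtil μ (t • v' + (1 - t) • v) (Pt t) : ℝ) : EReal) + D (Pt t)) ∧
      (∀ P ∈ SDSCset A Ω,
        ((linUtil μ (t • v' + (1 - t) • v) P : ℝ) : EReal) + D P =
          ((linUtil μ (t • v' + (1 - t) • v) (Pt t) : ℝ) : EReal) + D (Pt t) →
        P = Pt t)) :
    VE μ D v' - VE μ D v =
      ((∫ t in (0 : ℝ)..1,
        ∑ aw : A × Ω, Pt t aw * μ aw.2 * (v' aw - v aw) : ℝ) : EReal) := by
  classical
  set L : ℝ → ℝ := fun t => ∑ aw : A × Ω, Pt t aw * μ aw.2 * (v' aw - v aw) with hLdef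
  -- D is real (not ⊥) at each maximizer
  obtain ⟨P₀, hP₀mem, hP₀bot⟩ := hDfin
  have hDbot : ∀ t ∈ Set.Icc (0:ℝ) 1, D (Pt t) ≠ ⊥ := by
    intro t ht hbot
    have h1 := (hPt t ht).2.1 P₀ hP₀mem
    have hP0 : D P₀ = ((D P₀).toReal : EReal) := (EReal.coe_toReal (hDtop _) hP₀bot).symm
    rw [hbot, EReal.add_bot, hP0, ← EReal.coe_add, le_bot_iff] at h1
    exact EReal.coe_ne_bot _ h1
  have hDeq : ∀ t ∈ Set.Icc (0:ℝ) 1, D (Pt t) = (((D (Pt t)).toReal : ℝ) : EReal) :=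
    fun t ht => (EReal.coe_toReal (hDtop _) (hDbot t ht)).symm
  set φ : ℝ → ℝ :=
    fun t => linUtil μ (t • v' + (1 - t) • v) (Pt t) + (D (Pt t)).toReal with hφdef
  -- linearity of linUtil along the segment
  have hlin : ∀ (s t : ℝ) (P : A × Ω → ℝ),
      linUtil μ (t • v' + (1 - t) • v) P = linUtil μ (s • v' + (1 - s) • v) P
        + (t - s) * ∑ aw : A × Ω, P aw * μ aw.2 * (v' aw - v aw) := by
    intro s t P
    simp only [linUtil, Pi.add_apply, Pi.smul_apply, smul_eq_mul]
    rw [Finset.mul_sum, ← Finset.sum_add_distrib]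
    exact Finset.sum_congr rfl fun aw _ => by ring
  -- key subgradient inequality
  have key : ∀ s ∈ Set.Icc (0:ℝ) 1, ∀ t ∈ Set.Icc (0:ℝ) 1,
      φ s + (t - s) * L s ≤ φ t := by
    intro s hs t ht
    have h1 := (hPt t ht).2.1 (Pt s) (hPt s hs).1
    rw [hDeq s hs, hDeq t ht, ← EReal.coe_add, ← EReal.coe_add,
      EReal.coe_le_coe_iff] at h1
    have h2 := hlin s t (Pt s)
    have hLs : L s = ∑ aw : A × Ω, Pt s aw * μ aw.2 * (v' aw - v aw) := rfl
    have hφs : φ s = linUtil μ (s • v' + (1 - s) • v) (Pt s) + (D (Pt s)).toReal := rfl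
    have hφt : φ t = linUtil μ (t • v' + (1 - t) • v) (Pt t) + (D (Pt t)).toReal := rfl
    rw [hφs, hφt, hLs]
    linarith [h1, h2]
  -- L is monotone on [0,1]
  have hLmono : MonotoneOn L (Set.Icc (0:ℝ) 1) := by
    intro s hs t ht hst
    rcases eq_or_lt_of_le hst with rfl | h
    · exact le_refl _
    · have h1 := key s hs t ht
      have h2 := key t ht s hs
      have h3 : (t - s) * L s ≤ (t - s) * L t := by nlinarith
      exact (mul_le_mul_iff_right₀ (sub_pos.mpr h)).mp h3
  have hLint : ∀ a b : ℝ, a ∈ Set.Icc (0:ℝ) 1 → b ∈ Set.Icc (0:ℝ) 1 →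
      IntervalIntegrable L MeasureTheory.volume a b := fun a b ha hb =>
    (hLmono.mono (Set.uIcc_subset_Icc ha hb)).intervalIntegrable
  -- main FTC-type identity, by a Riemann-sum squeeze
  have main : φ 1 - φ 0 = ∫ t in (0:ℝ)..1, L t := by
    set J := ∫ t in (0:ℝ)..1, L t with hJ
    have bound : ∀ n : ℕ, 0 < n → |φ 1 - φ 0 - J| ≤ (L 1 - L 0) / n := by
      intro n hn
      have hn' : (0:ℝ) < n := Nat.cast_pos.mpr hn
      set x : ℕ → ℝ := fun i => i / n with hx
      have hxmem : ∀ i : ℕ, i ≤ n → x i ∈ Set.Icc (0:ℝ) 1 := by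
        intro i hi
        constructor
        · positivity
        · rw [hx]
          rw [div_le_one hn']
          exact_mod_cast hi
      have hxstep : ∀ i : ℕ, x (i+1) - x i = 1 / n := by
        intro i
        have : x (i+1) = ((i:ℝ)+1)/n := by rw [hx]; push_cast; ring
        rw [this, hx]
        field_simp
        ring
      have hxn : x n = 1 := by rw [hx]; exact div_self hn'.ne'
      have hx0 : x 0 = 0 := by rw [hx]; simp
      have tele1 : ∑ i ∈ Finset.range n, (φ (x (i+1)) - φ (x i)) = φ 1 - φ 0 := by
        rw [Finset.sum_range_sub (fun i => φ (x i)) n, hxn, hx0]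
      have tele2 : ∑ i ∈ Finset.range n, ∫ t in x i..x (i+1), L t = J := by
        rw [intervalIntegral.sum_integral_adjacent_intervals
          (fun k hk => hLint _ _ (hxmem k hk.le) (hxmem (k+1) hk)), hxn, hx0]
      have c1 : ∀ i < n, L (x i) * (1/n) ≤ φ (x (i+1)) - φ (x i) := by
        intro i hi
        have hk := key (x i) (hxmem i hi.le) (x (i+1)) (hxmem (i+1) hi)
        rw [hxstep i] at hk
        linarith
      have c2 : ∀ i < n, φ (x (i+1)) - φ (x i) ≤ L (x (i+1)) * (1/n) := by
        intro i hi
        have hk := key (x (i+1)) (hxmem (i+1) hi) (x i) (hxmem i hi.le)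
        have e : x i - x (i+1) = -(1/n) := by linarith [hxstep i]
        rw [e] at hk
        linarith
      have hmemsub : ∀ i < n, ∀ y ∈ Set.Icc (x i) (x (i+1)), y ∈ Set.Icc (0:ℝ) 1 := by
        intro i hi y hy
        exact ⟨le_trans (hxmem i hi.le).1 hy.1, le_trans hy.2 (hxmem (i+1) hi).2⟩
      have hxle : ∀ i : ℕ, x i ≤ x (i+1) := by
        intro i
        have := hxstep i
        have : (0:ℝ) < 1/n := by positivity
        linarith [hxstep i]
      have c3 : ∀ i < n, L (x i) * (1/n) ≤ ∫ t in x i..x (i+1), L t := by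
        intro i hi
        have h := intervalIntegral.integral_mono_on (hxle i)
          intervalIntegrable_const (hLint _ _ (hxmem i hi.le) (hxmem (i+1) hi))
          (fun y hy => hLmono (hxmem i hi.le) (hmemsub i hi y hy) hy.1)
        rw [intervalIntegral.integral_const, smul_eq_mul, hxstep i] at h
        linarith
      have c4 : ∀ i < n, (∫ t in x i..x (i+1), L t) ≤ L (x (i+1)) * (1/n) := by
        intro i hi
        have h := intervalIntegral.integral_mono_on (hxle i)
          (hLint _ _ (hxmem i hi.le) (hxmem (i+1) hi)) intervalIntegrable_const
          (fun y hy => hLmono (hmemsub i hi y hy) (hxmem (i+1) hi) hy.2)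
        rw [intervalIntegral.integral_const, smul_eq_mul, hxstep i] at h
        linarith
      have sumeq : ∑ i ∈ Finset.range n, (L (x (i+1)) * (1/n) - L (x i) * (1/n))
          = L (x n) * (1/n) - L (x 0) * (1/n) :=
        Finset.sum_range_sub (fun i => L (x i) * (1/n)) n
      rw [hxn, hx0] at sumeq
      have sumineq1 : φ 1 - φ 0 - J
          ≤ ∑ i ∈ Finset.range n, (L (x (i+1)) * (1/n) - L (x i) * (1/n)) := by
        rw [← tele1, ← tele2, ← Finset.sum_sub_distrib]
        apply Finset.sum_le_sum
        intro i hi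
        have := c2 i (Finset.mem_range.mp hi)
        have := c3 i (Finset.mem_range.mp hi)
        linarith
      have sumineq2 : -(∑ i ∈ Finset.range n, (L (x (i+1)) * (1/n) - L (x i) * (1/n)))
          ≤ φ 1 - φ 0 - J := by
        rw [← tele1, ← tele2, ← Finset.sum_sub_distrib, ← Finset.sum_neg_distrib]
        apply Finset.sum_le_sum
        intro i hi
        have := c1 i (Finset.mem_range.mp hi)
        have := c4 i (Finset.mem_range.mp hi)
        linarith
      have hrw : L 1 * (1/n) - L 0 * (1/n) = (L 1 - L 0) / n := by ring
      rw [abs_le]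
      constructor
      · rw [← hrw, ← sumeq]; exact sumineq2
      · rw [← hrw, ← sumeq]; exact sumineq1
    have hL10 : 0 ≤ L 1 - L 0 := by
      have := hLmono (Set.left_mem_Icc.mpr zero_le_one) (Set.right_mem_Icc.mpr zero_le_one)
        zero_le_one
      linarith
    have habs : |φ 1 - φ 0 - J| ≤ 0 := by
      refine le_of_forall_pos_le_add fun ε hε => ?_
      obtain ⟨n, hn⟩ := exists_nat_gt ((L 1 - L 0) / ε)
      have hn0 : 0 < n := by
        have : (0:ℝ) < n := lt_of_le_of_lt (div_nonneg hL10 hε.le) hn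
        exact_mod_cast this
      have hn' : (0:ℝ) < n := Nat.cast_pos.mpr hn0
      have hfin : (L 1 - L 0) / n ≤ ε := by
        rw [div_le_iff₀ hn']
        have := (div_lt_iff₀ hε).mp hn
        nlinarith
      calc |φ 1 - φ 0 - J| ≤ (L 1 - L 0) / n := bound n hn0
        _ ≤ ε := hfin
        _ = 0 + ε := (zero_add ε).symm
    have := abs_nonpos_iff.mp habs
    linarith [sub_eq_zero.mp this]
  -- identify VE along the segment
  have hVE : ∀ t ∈ Set.Icc (0:ℝ) 1,
      VE μ D (t • v' + (1 - t) • v) = ((φ t : ℝ) : EReal) := by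
    intro t ht
    have hval : ((linUtil μ (t • v' + (1 - t) • v) (Pt t) : ℝ) : EReal) + D (Pt t)
        = ((φ t : ℝ) : EReal) := by
      rw [hDeq t ht, ← EReal.coe_add]
    apply le_antisymm
    · apply iSup₂_le
      intro P hP
      exact le_of_le_of_eq ((hPt t ht).2.1 P hP) hval
    · rw [← hval]
      exact le_iSup₂ (f := fun P (_ : P ∈ SDSCset A Ω) =>
        ((linUtil μ (t • v' + (1 - t) • v) P : ℝ) : EReal) + D P) (Pt t) (hPt t ht).1
  have h1 : VE μ D v' = ((φ 1 : ℝ) : EReal) := by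
    have h := hVE 1 (Set.right_mem_Icc.mpr zero_le_one)
    have : (1:ℝ) • v' + (1 - 1 : ℝ) • v = v' := by
      simp
    rwa [this] at h
  have h0 : VE μ D v = ((φ 0 : ℝ) : EReal) := by
    have h := hVE 0 (Set.left_mem_Icc.mpr zero_le_one)
    have : (0:ℝ) • v' + (1 - 0 : ℝ) • v = v := by
      simp
    rwa [this] at h
  rw [h1, h0, ← EReal.coe_sub]
  exact_mod_cast congrArg (fun r : ℝ => (r : EReal)) main
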